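/- There exists a finite constant C (depending only on m and r̃_1,…,r̃_m) such that for all v ∈ [0,1], all 0 ≤ t < t' < ∞, and all x ∈ ℤ: |p_{t'}(x) − p_t(x)| ≤ C · min(1, t^{−1/2−v}) · (t'−t)^v. -/

import Mathlib

open Finset

/-- `φ(θ) := Σ_{k=1}^m r̃_k (1 − cos(kθ))`. -/
noncomputable def phiFn (m : ℕ) (r : ℕ → ℝ) (θ : ℝ) : ℝ :=
  ∑ k ∈ Finset.Icc 1 m, r k * (1 - Real.cos (k * θ))

/-- The semi-discrete heat kernel
`p_t(x) := (2π)⁻¹ ∫_{−π}^{π} e^{−ixθ} e^{−tφ(θ)} dθ`, a real number since `φ` is even. -/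
noncomputable def hk (m : ℕ) (r : ℕ → ℝ) (t : ℝ) (x : ℤ) : ℝ :=
  ((2 * (Real.pi : ℂ))⁻¹ * ∫ θ in (-Real.pi)..Real.pi,
      Complex.exp (-(x : ℂ) * Complex.I * (θ : ℂ)) *
        Complex.exp (-(t : ℂ) * ((phiFn m r θ : ℝ) : ℂ))).re

private lemma stmt7_phi_cont (m : ℕ) (r : ℕ → ℝ) : Continuous (phiFn m r) := by
  unfold phiFn
  exact continuous_finset_sum _ fun k _ =>
    continuous_const.mul (continuous_const.sub
      (Real.continuous_cos.comp (continuous_const.mul continuous_id)))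

private lemma stmt7_gauss_tail {b : ℝ} (hb : 0 < b) :
    ∫ θ in (-Real.pi)..Real.pi, Real.exp (-b * θ ^ 2) ≤ Real.sqrt (Real.pi / b) := by
  have hI := integrable_exp_neg_mul_sq hb
  rw [intervalIntegral.integral_of_le (by linarith [Real.pi_pos])]
  refine le_trans (MeasureTheory.setIntegral_le_integral hI
    (Filter.Eventually.of_forall fun x => (Real.exp_pos _).le)) ?_
  rw [integral_gaussian]

private lemma stmt7_interp {x a b v : ℝ} (hx : 0 ≤ x) (ha : 0 ≤ a) (hv0 : 0 ≤ v)
    (hv1 : v ≤ 1) (hxa : x ≤ a) (hxb : x ≤ b) :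
    x ≤ a ^ (1 - v) * b ^ v := by
  have h1 : x ^ (1 - v) * x ^ v = x := by
    rw [← Real.rpow_add' (y := 1 - v) (z := v) hx (by norm_num),
      show 1 - v + v = (1:ℝ) by ring, Real.rpow_one]
  calc x = x ^ (1 - v) * x ^ v := h1.symm
    _ ≤ a ^ (1 - v) * b ^ v :=
      mul_le_mul (Real.rpow_le_rpow hx hxa (by linarith))
        (Real.rpow_le_rpow hx hxb hv0) (Real.rpow_nonneg hx v) (Real.rpow_nonneg ha _)

private lemma stmt7_interp2 {a b s v : ℝ} (ha : 0 ≤ a) (hb : 0 ≤ b) (has : a ≤ s)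
    (hbs : b ≤ s) (hv0 : 0 ≤ v) (hv1 : v ≤ 1) : a ^ (1 - v) * b ^ v ≤ s := by
  have hs : 0 ≤ s := le_trans ha has
  have h1 : s ^ (1 - v) * s ^ v = s := by
    rw [← Real.rpow_add' (y := 1 - v) (z := v) hs (by norm_num),
      show 1 - v + v = (1:ℝ) by ring, Real.rpow_one]
  calc a ^ (1 - v) * b ^ v ≤ s ^ (1 - v) * s ^ v :=
        mul_le_mul (Real.rpow_le_rpow ha has (by linarith))
          (Real.rpow_le_rpow hb hbs hv0) (Real.rpow_nonneg hb v) (Real.rpow_nonneg hs _)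
    _ = s := h1

private lemma stmt7_hk_diff_le (m : ℕ) (r : ℕ → ℝ) {t t' : ℝ} (htt' : t ≤ t')
    (hφ0 : ∀ θ, 0 ≤ phiFn m r θ) (x : ℤ) :
    |hk m r t' x - hk m r t x| ≤
      ∫ θ in (-Real.pi)..Real.pi,
        (Real.exp (-(t * phiFn m r θ)) - Real.exp (-(t' * phiFn m r θ))) := by
  have hπ := Real.pi_pos
  have hφc := stmt7_phi_cont m r
  have hcont : ∀ s : ℝ, Continuous fun θ : ℝ =>
      Complex.exp (-(x : ℂ) * Complex.I * (θ : ℂ)) *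
        Complex.exp (-(s : ℂ) * ((phiFn m r θ : ℝ) : ℂ)) := by
    intro s
    exact (Complex.continuous_exp.comp (continuous_const.mul Complex.continuous_ofReal)).mul
      (Complex.continuous_exp.comp (continuous_const.mul
        (Complex.continuous_ofReal.comp hφc)))
  have hint : ∀ s : ℝ, IntervalIntegrable (fun θ : ℝ =>
      Complex.exp (-(x : ℂ) * Complex.I * (θ : ℂ)) *
        Complex.exp (-(s : ℂ) * ((phiFn m r θ : ℝ) : ℂ))) MeasureTheory.volume
      (-Real.pi) Real.pi := fun s => (hcont s).intervalIntegrable _ _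
  have hre : ∀ s θ : ℝ, Complex.exp (-(s : ℂ) * ((phiFn m r θ : ℝ) : ℂ)) =
      ((Real.exp (-(s * phiFn m r θ)) : ℝ) : ℂ) := by
    intro s θ
    rw [show (-(s : ℂ) * ((phiFn m r θ : ℝ) : ℂ)) = ((-(s * phiFn m r θ) : ℝ) : ℂ) by
      push_cast; ring, Complex.ofReal_exp]
  have hD0 : ∀ θ : ℝ, 0 ≤ Real.exp (-(t * phiFn m r θ)) - Real.exp (-(t' * phiFn m r θ)) := by
    intro θ
    have : t * phiFn m r θ ≤ t' * phiFn m r θ :=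
      mul_le_mul_of_nonneg_right htt' (hφ0 θ)
    have := Real.exp_le_exp.2 (neg_le_neg this)
    linarith
  unfold hk
  rw [← Complex.sub_re, ← mul_sub, ← intervalIntegral.integral_sub (hint t') (hint t)]
  refine le_trans (Complex.abs_re_le_norm _) ?_
  rw [norm_mul]
  have habs2π : ‖(2 * (Real.pi : ℂ))⁻¹‖ ≤ 1 := by
    rw [norm_inv, show (2 * (Real.pi : ℂ)) = ((2 * Real.pi : ℝ) : ℂ) by push_cast; ring,
      Complex.norm_real, Real.norm_eq_abs, abs_of_pos (by linarith)]
    rw [inv_le_one_iff₀]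
    right; linarith [Real.pi_gt_three]
  have hnormint : ‖(∫ θ in (-Real.pi)..Real.pi,
      (Complex.exp (-(x : ℂ) * Complex.I * (θ : ℂ)) *
        Complex.exp (-(t' : ℂ) * ((phiFn m r θ : ℝ) : ℂ)) -
       Complex.exp (-(x : ℂ) * Complex.I * (θ : ℂ)) *
        Complex.exp (-(t : ℂ) * ((phiFn m r θ : ℝ) : ℂ))))‖ ≤
      ∫ θ in (-Real.pi)..Real.pi,
        (Real.exp (-(t * phiFn m r θ)) - Real.exp (-(t' * phiFn m r θ))) := by
    refine le_trans (intervalIntegral.norm_integral_le_integral_norm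
      (le_of_lt (by linarith : -Real.pi < Real.pi))) ?_
    refine le_of_eq (intervalIntegral.integral_congr ?_)
    intro θ _
    beta_reduce
    have h1 : ‖Complex.exp (-(x : ℂ) * Complex.I * (θ : ℂ))‖ = 1 := by
      rw [Complex.norm_exp]
      norm_num [Complex.mul_re]
    rw [show (Complex.exp (-(x : ℂ) * Complex.I * (θ : ℂ)) *
        Complex.exp (-(t' : ℂ) * ((phiFn m r θ : ℝ) : ℂ)) -
       Complex.exp (-(x : ℂ) * Complex.I * (θ : ℂ)) *
        Complex.exp (-(t : ℂ) * ((phiFn m r θ : ℝ) : ℂ))) =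
      Complex.exp (-(x : ℂ) * Complex.I * (θ : ℂ)) *
        (Complex.exp (-(t' : ℂ) * ((phiFn m r θ : ℝ) : ℂ)) -
         Complex.exp (-(t : ℂ) * ((phiFn m r θ : ℝ) : ℂ))) by ring]
    rw [norm_mul, h1, one_mul, hre t' θ, hre t θ,
      ← Complex.ofReal_sub, Complex.norm_real, Real.norm_eq_abs, abs_sub_comm,
      abs_of_nonneg (hD0 θ)]
  calc ‖(2 * (Real.pi : ℂ))⁻¹‖ * ‖(∫ θ in (-Real.pi)..Real.pi,
        (Complex.exp (-(x : ℂ) * Complex.I * (θ : ℂ)) *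
          Complex.exp (-(t' : ℂ) * ((phiFn m r θ : ℝ) : ℂ)) -
         Complex.exp (-(x : ℂ) * Complex.I * (θ : ℂ)) *
          Complex.exp (-(t : ℂ) * ((phiFn m r θ : ℝ) : ℂ))))‖ ≤
        1 * ∫ θ in (-Real.pi)..Real.pi,
          (Real.exp (-(t * phiFn m r θ)) - Real.exp (-(t' * phiFn m r θ))) :=
      mul_le_mul habs2π hnormint (norm_nonneg _) one_pos.le
    _ = _ := one_mul _

set_option maxHeartbeats 1000000 in
theorem stmt7 (m : ℕ) (hm : 1 ≤ m) (r : ℕ → ℝ) (hr : ∀ k ∈ Finset.Icc 1 m, 0 < r k) :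
    ∃ C : ℝ, ∀ v ∈ Set.Icc (0:ℝ) 1, ∀ t t' : ℝ, 0 ≤ t → t < t' → ∀ x : ℤ,
      |hk m r t' x - hk m r t x| ≤
        C * (if t = 0 then 1 else min 1 (t ^ (-(1/2 : ℝ) - v))) * (t' - t) ^ v := by
  have hπ : 0 < Real.pi := Real.pi_pos
  set M : ℝ := ∑ k ∈ Finset.Icc 1 m, 2 * r k with hMdef
  have hM : 0 ≤ M := Finset.sum_nonneg fun k hk => by linarith [hr k hk]
  have hr1 : 0 < r 1 := hr 1 (Finset.mem_Icc.2 ⟨le_refl 1, hm⟩)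
  set c : ℝ := r 1 * (2 / Real.pi ^ 2) with hcdef
  have hc : 0 < c := by positivity
  set A : ℝ := Real.sqrt (Real.pi / c) with hAdef
  set B : ℝ := Real.sqrt (2 * Real.pi / c) with hBdef
  have hA : 0 ≤ A := Real.sqrt_nonneg _
  have hB : 0 ≤ B := Real.sqrt_nonneg _
  refine ⟨2 * Real.pi * (1 + M) + (A + 2 * B), ?_⟩
  rintro v ⟨hv0, hv1⟩ t t' ht htt' x
  set K : ℝ := 2 * Real.pi * (1 + M) + (A + 2 * B) with hKdef
  set δ : ℝ := t' - t with hδdef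
  have hδ : 0 < δ := by simp [hδdef]; linarith
  set φ : ℝ → ℝ := phiFn m r with hφdef
  have hφc : Continuous φ := stmt7_phi_cont m r
  have hφ0 : ∀ θ, 0 ≤ φ θ := by
    intro θ
    refine Finset.sum_nonneg fun k hk => mul_nonneg (hr k hk).le ?_
    linarith [Real.cos_le_one ((k : ℝ) * θ)]
  have hφM : ∀ θ, φ θ ≤ M := by
    intro θ
    refine Finset.sum_le_sum fun k hk => ?_
    nlinarith [Real.neg_one_le_cos ((k : ℝ) * θ), hr k hk]
  have hφq : ∀ θ, |θ| ≤ Real.pi → c * θ ^ 2 ≤ φ θ := by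
    intro θ hθ
    have h1 : r 1 * (1 - Real.cos ((1 : ℕ) * θ)) ≤ φ θ := by
      refine Finset.single_le_sum (f := fun k : ℕ => r k * (1 - Real.cos ((k : ℝ) * θ)))
        (fun k hk => mul_nonneg (hr k hk).le (by linarith [Real.cos_le_one ((k : ℝ) * θ)]))
        (Finset.mem_Icc.2 ⟨le_refl 1, hm⟩)
    have h2 := Real.cos_le_one_sub_mul_cos_sq hθ
    have h3 : ((1 : ℕ) : ℝ) * θ = θ := by norm_num
    rw [h3] at h1
    nlinarith [hr1, sq_nonneg θ]
  -- the difference function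
  set D : ℝ → ℝ := fun θ => Real.exp (-(t * φ θ)) - Real.exp (-(t' * φ θ)) with hDdef
  have hDc : Continuous D := by
    refine Continuous.sub ?_ ?_ <;>
      exact Real.continuous_exp.comp (Continuous.neg (continuous_const.mul hφc))
  have hDint : IntervalIntegrable D MeasureTheory.volume (-Real.pi) Real.pi :=
    hDc.intervalIntegrable _ _
  have hexp1 : ∀ y : ℝ, 0 ≤ y → Real.exp (-y) ≤ 1 := by
    intro y hy
    rw [← Real.exp_zero]
    exact Real.exp_le_exp.2 (by linarith)
  have hkey : ∀ θ : ℝ, D θ ≤ δ * φ θ * Real.exp (-(t * φ θ)) := by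
    intro θ
    have h := Real.add_one_le_exp (-(δ * φ θ))
    have hE : Real.exp (-(t' * φ θ)) =
        Real.exp (-(t * φ θ)) * Real.exp (-(δ * φ θ)) := by
      rw [← Real.exp_add]; congr 1; simp [hδdef]; ring
    have hexp := Real.exp_pos (-(t * φ θ))
    have h2 : 1 - Real.exp (-(δ * φ θ)) ≤ δ * φ θ := by linarith
    have h3 := mul_le_mul_of_nonneg_left h2 hexp.le
    simp only [hDdef]
    rw [hE]
    nlinarith
  have hD0 : ∀ θ, 0 ≤ D θ := by
    intro θ
    have : t * φ θ ≤ t' * φ θ := mul_le_mul_of_nonneg_right htt'.le (hφ0 θ)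
    have := Real.exp_le_exp.2 (neg_le_neg this)
    simp only [hDdef]; linarith
  have hD1 : ∀ θ, D θ ≤ 1 := by
    intro θ
    have h1 : D θ ≤ Real.exp (-(t * φ θ)) := by
      simp only [hDdef]; linarith [Real.exp_pos (-(t' * φ θ))]
    exact h1.trans (hexp1 _ (mul_nonneg ht (hφ0 θ)))
  have hstep := stmt7_hk_diff_le m r htt'.le hφ0 x
  set I : ℝ := ∫ θ in (-Real.pi)..Real.pi, D θ with hIdef
  have hI0 : 0 ≤ I :=
    intervalIntegral.integral_nonneg (by linarith) fun θ _ => hD0 θ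
  have hIa : I ≤ 2 * Real.pi := by
    calc I ≤ ∫ _ in (-Real.pi)..Real.pi, (1 : ℝ) :=
          intervalIntegral.integral_mono_on (by linarith) hDint
            intervalIntegrable_const (fun θ _ => hD1 θ)
      _ = 2 * Real.pi := by simp; ring
  have hIb : I ≤ 2 * Real.pi * (M * δ) := by
    have hptw : ∀ θ ∈ Set.Icc (-Real.pi) Real.pi, D θ ≤ M * δ := by
      intro θ _
      have h1 := hkey θ
      have h2 := hexp1 _ (mul_nonneg ht (hφ0 θ))
      have h3 := hφM θ
      have h4 := hφ0 θ
      have h5 := (Real.exp_pos (-(t * φ θ))).le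
      have h6 : δ * φ θ * Real.exp (-(t * φ θ)) ≤ δ * φ θ * 1 :=
        mul_le_mul_of_nonneg_left h2 (mul_nonneg hδ.le h4)
      have h7 : δ * φ θ ≤ δ * M := mul_le_mul_of_nonneg_left h3 hδ.le
      linarith
    calc I ≤ ∫ _ in (-Real.pi)..Real.pi, (M * δ) :=
          intervalIntegral.integral_mono_on (by linarith) hDint
            intervalIntegrable_const hptw
      _ = 2 * Real.pi * (M * δ) := by simp; ring
  -- case split on t ≤ 1
  by_cases hle1 : t ≤ 1
  · have hW : (if t = 0 then (1:ℝ) else min 1 (t ^ (-(1/2 : ℝ) - v))) = 1 := by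
      split_ifs with h
      · rfl
      · rw [min_eq_left]
        exact Real.one_le_rpow_of_pos_of_le_one_of_nonpos
          (lt_of_le_of_ne ht (Ne.symm h)) hle1 (by linarith)
    rw [hW, mul_one]
    have h1 : I ≤ (2 * Real.pi) ^ (1 - v) * (2 * Real.pi * (M * δ)) ^ v :=
      stmt7_interp hI0 (by linarith) hv0 hv1 hIa hIb
    have h2 : (2 * Real.pi * (M * δ)) ^ v = (2 * Real.pi * M) ^ v * δ ^ v := by
      rw [show 2 * Real.pi * (M * δ) = (2 * Real.pi * M) * δ by ring,
        Real.mul_rpow (by positivity) hδ.le]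
    have h3 : (2 * Real.pi) ^ (1 - v) * (2 * Real.pi * M) ^ v ≤ 2 * Real.pi * (1 + M) :=
      stmt7_interp2 (by positivity) (by positivity) (by nlinarith [hπ, hM])
        (by nlinarith [hπ, hM]) hv0 hv1
    calc |hk m r t' x - hk m r t x| ≤ I := hstep
      _ ≤ (2 * Real.pi) ^ (1 - v) * (2 * Real.pi * (M * δ)) ^ v := h1
      _ = ((2 * Real.pi) ^ (1 - v) * (2 * Real.pi * M) ^ v) * δ ^ v := by rw [h2]; ring
      _ ≤ (2 * Real.pi * (1 + M)) * δ ^ v := by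
          exact mul_le_mul_of_nonneg_right h3 (Real.rpow_nonneg hδ.le v)
      _ ≤ K * δ ^ v := by
          have : (0:ℝ) ≤ δ ^ v := Real.rpow_nonneg hδ.le v
          nlinarith [hA, hB]
  · push_neg at hle1
    have ht0 : 0 < t := lt_trans one_pos hle1
    have hW : (if t = 0 then (1:ℝ) else min 1 (t ^ (-(1/2 : ℝ) - v))) =
        t ^ (-(1/2 : ℝ) - v) := by
      rw [if_neg ht0.ne']
      exact min_eq_right (Real.rpow_le_one_of_one_le_of_nonpos hle1.le (by linarith))
    rw [hW]
    -- Gaussian bounds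
    have hIc : I ≤ A * t ^ (-(1/2) : ℝ) := by
      have hptw : ∀ θ ∈ Set.Icc (-Real.pi) Real.pi, D θ ≤ Real.exp (-(c * t) * θ ^ 2) := by
        intro θ hθ
        have hq := hφq θ (abs_le.2 ⟨hθ.1, hθ.2⟩)
        have h1 : D θ ≤ Real.exp (-(t * φ θ)) := by
          simp only [hDdef]; linarith [Real.exp_pos (-(t' * φ θ))]
        refine h1.trans (Real.exp_le_exp.2 ?_)
        nlinarith
      have hcont : Continuous fun θ : ℝ => Real.exp (-(c * t) * θ ^ 2) := by
        exact Real.continuous_exp.comp (by continuity)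
      have h2 : I ≤ ∫ θ in (-Real.pi)..Real.pi, Real.exp (-(c * t) * θ ^ 2) :=
        intervalIntegral.integral_mono_on (by linarith) hDint
          (hcont.intervalIntegrable _ _) hptw
      have h3 := stmt7_gauss_tail (b := c * t) (by positivity)
      have h4 : Real.sqrt (Real.pi / (c * t)) = A * t ^ (-(1/2) : ℝ) := by
        rw [show Real.pi / (c * t) = (Real.pi / c) * t⁻¹ by field_simp,
          Real.sqrt_mul (by positivity), Real.sqrt_inv, hAdef,
          Real.sqrt_eq_rpow t, ← Real.rpow_neg ht0.le]
      linarith [h2, h3, h4 ▸ h3]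
    have hId : I ≤ (2 * B) * t ^ (-(3/2) : ℝ) * δ := by
      have hfe : ∀ θ : ℝ, φ θ * Real.exp (-(t * φ θ / 2)) ≤ 2 / t := by
        intro θ
        set u : ℝ := t * φ θ / 2 with hudef
        have hu0 : 0 ≤ u := by
          rw [hudef]; exact div_nonneg (mul_nonneg ht0.le (hφ0 θ)) (by norm_num)
        have h1 : u ≤ Real.exp u := by linarith [Real.add_one_le_exp u]
        have h2 : u * Real.exp (-u) ≤ 1 := by
          rw [Real.exp_neg]
          have h3 := mul_le_mul_of_nonneg_right h1 (inv_nonneg.2 (Real.exp_pos u).le)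
          rwa [mul_inv_cancel₀ (Real.exp_pos u).ne'] at h3
        have h4 : φ θ = (2 / t) * u := by
          rw [hudef]; field_simp
        rw [h4]
        calc (2 / t) * u * Real.exp (-u) = (2 / t) * (u * Real.exp (-u)) := by ring
          _ ≤ (2 / t) * 1 := by
              exact mul_le_mul_of_nonneg_left h2 (by positivity)
          _ = 2 / t := mul_one _
      have hptw : ∀ θ ∈ Set.Icc (-Real.pi) Real.pi,
          D θ ≤ δ * ((2 / t) * Real.exp (-(c * t / 2) * θ ^ 2)) := by
        intro θ hθ
        have hq := hφq θ (abs_le.2 ⟨hθ.1, hθ.2⟩)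
        have hEsplit : Real.exp (-(t * φ θ)) =
            Real.exp (-(t * φ θ / 2)) * Real.exp (-(t * φ θ / 2)) := by
          rw [← Real.exp_add]; congr 1; ring
        have h1 : D θ ≤ δ * φ θ * Real.exp (-(t * φ θ)) := hkey θ
        have h2 : Real.exp (-(t * φ θ / 2)) ≤ Real.exp (-(c * t / 2) * θ ^ 2) := by
          refine Real.exp_le_exp.2 ?_
          nlinarith
        have h3 := hfe θ
        have he1 := (Real.exp_pos (-(t * φ θ / 2))).le
        have he2 := (Real.exp_pos (-(c * t / 2) * θ ^ 2)).le
        calc D θ ≤ δ * φ θ * Real.exp (-(t * φ θ)) := h1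
          _ = δ * ((φ θ * Real.exp (-(t * φ θ / 2))) * Real.exp (-(t * φ θ / 2))) := by
              rw [hEsplit]; ring
          _ ≤ δ * ((2 / t) * Real.exp (-(c * t / 2) * θ ^ 2)) := by
              refine mul_le_mul_of_nonneg_left ?_ hδ.le
              refine mul_le_mul h3 h2 he1 (by positivity)
      have hcont : Continuous fun θ : ℝ => δ * ((2 / t) * Real.exp (-(c * t / 2) * θ ^ 2)) := by
        exact continuous_const.mul (continuous_const.mul
          (Real.continuous_exp.comp (by continuity)))
      have h2 : I ≤ ∫ θ in (-Real.pi)..Real.pi,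
          δ * ((2 / t) * Real.exp (-(c * t / 2) * θ ^ 2)) :=
        intervalIntegral.integral_mono_on (by linarith) hDint
          (hcont.intervalIntegrable _ _) hptw
      have h3 : ∫ θ in (-Real.pi)..Real.pi, δ * ((2 / t) * Real.exp (-(c * t / 2) * θ ^ 2)) =
          δ * (2 / t) * ∫ θ in (-Real.pi)..Real.pi, Real.exp (-(c * t / 2) * θ ^ 2) := by
        rw [← intervalIntegral.integral_const_mul]
        congr 1; funext θ; ring
      have h4 := stmt7_gauss_tail (b := c * t / 2) (by positivity)
      have h5 : Real.sqrt (Real.pi / (c * t / 2)) = B * t ^ (-(1/2) : ℝ) := by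
        rw [show Real.pi / (c * t / 2) = (2 * Real.pi / c) * t⁻¹ by field_simp,
          Real.sqrt_mul (by positivity), Real.sqrt_inv, hBdef,
          Real.sqrt_eq_rpow t, ← Real.rpow_neg ht0.le]
      have h6 : δ * (2 / t) * (B * t ^ (-(1/2) : ℝ)) = (2 * B) * t ^ (-(3/2) : ℝ) * δ := by
        have h7 : t⁻¹ * t ^ (-(1/2) : ℝ) = t ^ (-(3/2) : ℝ) := by
          rw [show t⁻¹ = t ^ (-1 : ℝ) by rw [Real.rpow_neg_one],
            ← Real.rpow_add ht0, show (-1 : ℝ) + -(1/2) = -(3/2) by norm_num]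
        calc δ * (2 / t) * (B * t ^ (-(1/2) : ℝ)) =
              (2 * B) * (t⁻¹ * t ^ (-(1/2) : ℝ)) * δ := by field_simp
          _ = (2 * B) * t ^ (-(3/2) : ℝ) * δ := by rw [h7]
      have h8 : δ * (2 / t) * ∫ θ in (-Real.pi)..Real.pi, Real.exp (-(c * t / 2) * θ ^ 2) ≤
          δ * (2 / t) * Real.sqrt (Real.pi / (c * t / 2)) :=
        mul_le_mul_of_nonneg_left h4 (by positivity)
      calc I ≤ δ * (2 / t) * ∫ θ in (-Real.pi)..Real.pi,
              Real.exp (-(c * t / 2) * θ ^ 2) := by rw [← h3]; exact h2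
        _ ≤ δ * (2 / t) * Real.sqrt (Real.pi / (c * t / 2)) := h8
        _ = (2 * B) * t ^ (-(3/2) : ℝ) * δ := by rw [h5]; exact h6
    -- interpolate
    have hIfin : I ≤ (A * t ^ (-(1/2) : ℝ)) ^ (1 - v) *
        ((2 * B) * t ^ (-(3/2) : ℝ) * δ) ^ v :=
      stmt7_interp hI0 (by positivity) hv0 hv1 hIc hId
    have hkeyeq : (A * t ^ (-(1/2) : ℝ)) ^ (1 - v) * ((2 * B) * t ^ (-(3/2) : ℝ) * δ) ^ v =
        (A ^ (1 - v) * (2 * B) ^ v) * t ^ (-(1/2 : ℝ) - v) * δ ^ v := by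
      rw [Real.mul_rpow hA (Real.rpow_nonneg ht0.le _),
        Real.mul_rpow (mul_nonneg (by positivity) (Real.rpow_nonneg ht0.le _)) hδ.le,
        Real.mul_rpow (by positivity) (Real.rpow_nonneg ht0.le _),
        ← Real.rpow_mul ht0.le, ← Real.rpow_mul ht0.le,
        show A ^ (1 - v) * t ^ ((-(1/2) : ℝ) * (1 - v)) *
          ((2 * B) ^ v * t ^ ((-(3/2) : ℝ) * v) * δ ^ v) =
          (A ^ (1 - v) * (2 * B) ^ v) *
            (t ^ ((-(1/2) : ℝ) * (1 - v)) * t ^ ((-(3/2) : ℝ) * v)) * δ ^ v from by ring,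
        ← Real.rpow_add ht0,
        show (-(1/2) : ℝ) * (1 - v) + (-(3/2) : ℝ) * v = -(1/2 : ℝ) - v from by ring]
    have hconst : A ^ (1 - v) * (2 * B) ^ v ≤ A + 2 * B :=
      stmt7_interp2 hA (by positivity) (by linarith) (by linarith) hv0 hv1
    have htpow : (0:ℝ) ≤ t ^ (-(1/2 : ℝ) - v) := Real.rpow_nonneg ht0.le _
    have hδv : (0:ℝ) ≤ δ ^ v := Real.rpow_nonneg hδ.le v
    calc |hk m r t' x - hk m r t x| ≤ I := hstep
      _ ≤ (A * t ^ (-(1/2) : ℝ)) ^ (1 - v) * ((2 * B) * t ^ (-(3/2) : ℝ) * δ) ^ v := hIfin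
      _ = (A ^ (1 - v) * (2 * B) ^ v) * t ^ (-(1/2 : ℝ) - v) * δ ^ v := hkeyeq
      _ ≤ (A + 2 * B) * t ^ (-(1/2 : ℝ) - v) * δ ^ v :=
          mul_le_mul_of_nonneg_right
            (mul_le_mul_of_nonneg_right hconst htpow) hδv
      _ ≤ K * t ^ (-(1/2 : ℝ) - v) * δ ^ v := by
          have hK : A + 2 * B ≤ K := by nlinarith [hM, hπ]
          exact mul_le_mul_of_nonneg_right (mul_le_mul_of_nonneg_right hK htpow) hδv
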